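/- Let Φ be the standard normal cumulative distribution function and, for a positive integer k and real n > 2k, set Φ_{k,n} = Φ((2k − n)/√n). For c > 0 and k > 2c, let n₀(c,k) be the smallest real value n > 2k with Φ_{k,n} ≤ c/k; explicitly, n₀(c,k) = ((√(8k + z²) − z)/2)² where z = Φ^{−1}(c/k). Then for any fixed 0 < c' < c there exists a finite constant C = C(c,c') such that limsup over k₀ → ∞ of sup_{k ≥ k₀} |n₀(c,k) − n₀(c',k)| / √(n₀(c,k)) is at most C; in particular one may take C = 1 + 2 C₁ Φ^{−1}(1 − c'/(2c)) where C₁ is a uniform bound on the z-derivative of z ↦ (√(8k + z²) − z)/2. -/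

import Mathlib

open scoped BigOperators

/-- The standard normal cumulative distribution function
`Φ(z) = (2π)^{−1/2} ∫_{−∞}^{z} e^{−t²/2} dt`. -/
noncomputable def stdNormCDF (z : ℝ) : ℝ :=
  (Real.sqrt (2 * Real.pi))⁻¹ * ∫ t in Set.Iic z, Real.exp (-(t ^ 2) / 2)

/-- The inverse (quantile function) of the standard normal CDF. -/
noncomputable def PhiInv : ℝ → ℝ := Function.invFun stdNormCDF

/-- `n₀(c,k) = ((√(8k + z²) − z)/2)²` where `z = Φ⁻¹(c/k)`: the smallest real `n > 2k`
with `Φ((2k − n)/√n) ≤ c/k`. -/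
noncomputable def n0 (c : ℝ) (k : ℕ) : ℝ :=
  ((Real.sqrt (8 * k + (PhiInv (c / k)) ^ 2) - PhiInv (c / k)) / 2) ^ 2

set_option maxHeartbeats 1000000

open MeasureTheory Set Filter Topology

lemma g_int : Integrable (fun t : ℝ => Real.exp (-(t ^ 2) / 2)) := by
  have h := integrable_exp_neg_mul_sq (show (0:ℝ) < 1/2 by norm_num)
  have he : (fun t : ℝ => Real.exp (-(t ^ 2) / 2)) = fun t : ℝ => Real.exp (-(1/2) * t ^ 2) := by
    funext t; congr 1; ring
  rw [he]; exact h

lemma g_total : ∫ t : ℝ, Real.exp (-(t ^ 2) / 2) = Real.sqrt (2 * Real.pi) := by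
  have he : (fun t : ℝ => Real.exp (-(t ^ 2) / 2)) = fun t : ℝ => Real.exp (-(1/2) * t ^ 2) := by
    funext t; congr 1; ring
  rw [he, integral_gaussian]
  rw [show Real.pi / (1/2) = 2 * Real.pi by ring]

lemma sqrt2pi_pos : 0 < Real.sqrt (2 * Real.pi) :=
  Real.sqrt_pos.2 (by positivity)

lemma phi_sub (a b : ℝ) : stdNormCDF b - stdNormCDF a
    = (Real.sqrt (2 * Real.pi))⁻¹ * ∫ t in a..b, Real.exp (-(t ^ 2) / 2) := by
  unfold stdNormCDF
  rw [← mul_sub, intervalIntegral.integral_Iic_sub_Iic g_int.integrableOn g_int.integrableOn]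

lemma phi_strictMono : StrictMono stdNormCDF := by
  intro a b hab
  have h := phi_sub a b
  have hpos : 0 < ∫ t in a..b, Real.exp (-(t ^ 2) / 2) :=
    intervalIntegral.intervalIntegral_pos_of_pos_on g_int.intervalIntegrable
      (fun x _ => Real.exp_pos _) hab
  nlinarith [sqrt2pi_pos, mul_pos (inv_pos.2 sqrt2pi_pos) hpos]

lemma phi_continuous : Continuous stdNormCDF := by
  have h : Continuous fun b => ∫ t in (0:ℝ)..b, Real.exp (-(t ^ 2) / 2) :=
    intervalIntegral.continuous_primitive (fun a b => g_int.intervalIntegrable) 0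
  have heq : stdNormCDF = fun z => stdNormCDF 0
      + (Real.sqrt (2 * Real.pi))⁻¹ * ∫ t in (0:ℝ)..z, Real.exp (-(t ^ 2) / 2) := by
    funext z
    have := phi_sub 0 z
    linarith
  rw [heq]
  exact continuous_const.add (continuous_const.mul h)

lemma phi_nonneg (x : ℝ) : 0 ≤ stdNormCDF x := by
  unfold stdNormCDF
  exact mul_nonneg (inv_nonneg.2 (Real.sqrt_nonneg _))
    (setIntegral_nonneg measurableSet_Iic fun t _ => (Real.exp_pos _).le)

lemma phi_pos (x : ℝ) : 0 < stdNormCDF x :=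
  lt_of_le_of_lt (phi_nonneg (x - 1)) (phi_strictMono (by linarith))

lemma phi_tendsto_atTop : Tendsto stdNormCDF atTop (𝓝 1) := by
  have h : Tendsto (fun z : ℝ => ∫ t in Iic z, Real.exp (-(t ^ 2) / 2)) atTop
      (𝓝 (∫ t in ⋃ z : ℝ, Iic z, Real.exp (-(t ^ 2) / 2))) :=
    tendsto_setIntegral_of_monotone (fun _ => measurableSet_Iic)
      (fun a b hab => Iic_subset_Iic.2 hab) (by rw [iUnion_Iic]; exact g_int.integrableOn)
  rw [iUnion_Iic, setIntegral_univ, g_total] at h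
  have := h.const_mul (Real.sqrt (2 * Real.pi))⁻¹
  rw [inv_mul_cancel₀ sqrt2pi_pos.ne'] at this
  exact this

lemma phi_tendsto_atBot : Tendsto stdNormCDF atBot (𝓝 0) := by
  have h : Tendsto (fun z : ℝ => ∫ t in Iic (-z), Real.exp (-(t ^ 2) / 2)) atTop
      (𝓝 (∫ t in ⋂ z : ℝ, Iic (-z), Real.exp (-(t ^ 2) / 2))) :=
    tendsto_setIntegral_of_antitone (fun _ => measurableSet_Iic)
      (fun a b hab => Iic_subset_Iic.2 (by linarith)) ⟨0, g_int.integrableOn⟩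
  have hempty : (⋂ z : ℝ, Iic (-z)) = ∅ := by
    ext x
    simp only [mem_iInter, mem_Iic, mem_empty_iff_false, iff_false, not_forall, not_le]
    exact ⟨-x + 1, by linarith⟩
  rw [hempty] at h
  simp only [Measure.restrict_empty, integral_zero_measure] at h
  have h2 := h.comp tendsto_neg_atBot_atTop
  simp only [Function.comp_def, neg_neg] at h2
  have h3 := h2.const_mul (Real.sqrt (2 * Real.pi))⁻¹
  rw [mul_zero] at h3
  exact h3

lemma phi_zero : stdNormCDF 0 = 1/2 := by
  have hsym : (∫ t in Iic (0:ℝ), Real.exp (-(t ^ 2) / 2))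
      = ∫ t in Ioi (0:ℝ), Real.exp (-(t ^ 2) / 2) := by
    have := integral_comp_neg_Iic (0:ℝ) (fun t => Real.exp (-(t ^ 2) / 2))
    simpa using this
  have htot : (∫ t in Iic (0:ℝ), Real.exp (-(t ^ 2) / 2))
      + ∫ t in Ioi (0:ℝ), Real.exp (-(t ^ 2) / 2) = Real.sqrt (2 * Real.pi) := by
    rw [intervalIntegral.integral_Iic_add_Ioi g_int.integrableOn g_int.integrableOn, g_total]
  have hIic : (∫ t in Iic (0:ℝ), Real.exp (-(t ^ 2) / 2)) = Real.sqrt (2 * Real.pi) / 2 := by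
    rw [hsym] at htot ⊢  -- no; just linarith
    linarith
  unfold stdNormCDF
  rw [hIic]
  field_simp

lemma phi_surj {y : ℝ} (h0 : 0 < y) (h1 : y < 1) : ∃ x, stdNormCDF x = y := by
  obtain ⟨a, ha⟩ := (phi_tendsto_atBot.eventually_lt_const h0).exists
  obtain ⟨b, hb⟩ := (phi_tendsto_atTop.eventually_const_lt h1).exists
  have hab : a ≤ b := by
    by_contra h
    push_neg at h
    have := phi_strictMono h
    linarith
  obtain ⟨x, _, hx⟩ := intermediate_value_Icc hab phi_continuous.continuousOn ⟨ha.le, hb.le⟩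
  exact ⟨x, hx⟩

/-- Mean value lower bound on increments of Φ in the left tail. -/
lemma gap_lower {a b : ℝ} (hab : a ≤ b) (hb : b ≤ 0) :
    (b - a) * Real.exp (-(a ^ 2) / 2)
      ≤ Real.sqrt (2 * Real.pi) * (stdNormCDF b - stdNormCDF a) := by
  rw [phi_sub a b, ← mul_assoc, mul_inv_cancel₀ sqrt2pi_pos.ne', one_mul]
  have hmono : ∫ t in a..b, Real.exp (-(a ^ 2) / 2) ≤ ∫ t in a..b, Real.exp (-(t ^ 2) / 2) := by
    apply intervalIntegral.integral_mono_on hab intervalIntegrable_const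
      g_int.intervalIntegrable
    intro x hx
    rw [mem_Icc] at hx
    apply Real.exp_le_exp.2
    nlinarith [hx.1, hx.2]
  rw [intervalIntegral.integral_const, smul_eq_mul] at hmono
  linarith

/-- Gaussian tail upper bound: `√(2π) Φ(z) (−z) ≤ exp(−z²/2)` for `z < 0`. -/
lemma tail_upper {z : ℝ} (hz : z < 0) :
    Real.sqrt (2 * Real.pi) * stdNormCDF z * (-z) ≤ Real.exp (-(z ^ 2) / 2) := by
  have hderiv : ∀ x ∈ Iic z, HasDerivAt (fun t : ℝ => Real.exp (-(t ^ 2) / 2))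
      (-x * Real.exp (-(x ^ 2) / 2)) x := by
    intro x _
    have h0 : HasDerivAt (fun t : ℝ => t ^ 2) (2 * x) x := by
      simpa using hasDerivAt_pow 2 x
    have h1 : HasDerivAt (fun t : ℝ => -(t ^ 2) / 2) (-x) x := by
      have h2 := (h0.neg).div_const 2
      have : -(2 * x) / 2 = -x := by ring
      rwa [this] at h2
    have h3 := h1.exp
    have : Real.exp (-(x ^ 2) / 2) * -x = -x * Real.exp (-(x ^ 2) / 2) := by ring
    rwa [this] at h3
  have hint : IntegrableOn (fun x : ℝ => -x * Real.exp (-(x ^ 2) / 2)) (Iic z) := by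
    have h := (integrable_mul_exp_neg_mul_sq (show (0:ℝ) < 1/2 by norm_num)).neg
    have he : (fun x : ℝ => -x * Real.exp (-(x ^ 2) / 2))
        = fun x : ℝ => -(x * Real.exp (-(1/2) * x ^ 2)) := by
      funext x
      have : Real.exp (-(x ^ 2) / 2) = Real.exp (-(1/2) * x ^ 2) := by congr 1; ring
      rw [this]; ring
    rw [he]
    exact h.integrableOn
  have htend : Tendsto (fun t : ℝ => Real.exp (-(t ^ 2) / 2)) atBot (𝓝 0) := by
    have hsq : Tendsto (fun t : ℝ => t ^ 2) atBot atTop := by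
      rw [tendsto_atTop]
      intro b
      filter_upwards [eventually_le_atBot (-(|b| + 1))] with t ht
      nlinarith [le_abs_self b, abs_nonneg b, sq_nonneg (t + |b| + 1)]
    have h4 : Tendsto (fun t : ℝ => -(t ^ 2)) atBot atBot := tendsto_neg_atTop_atBot.comp hsq
    have h5 : Tendsto (fun t : ℝ => -(t ^ 2) / 2) atBot atBot := h4.atBot_div_const (by norm_num)
    have h6 := Real.tendsto_exp_atBot.comp h5
    simpa [Function.comp_def] using h6
  have key : ∫ x in Iic z, -x * Real.exp (-(x ^ 2) / 2) = Real.exp (-(z ^ 2) / 2) := by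
    have := MeasureTheory.integral_Iic_of_hasDerivAt_of_tendsto' hderiv hint htend
    rw [this]; ring
  have hmono : ∫ x in Iic z, -z * Real.exp (-(x ^ 2) / 2)
      ≤ ∫ x in Iic z, -x * Real.exp (-(x ^ 2) / 2) := by
    apply setIntegral_mono_on ((g_int.const_mul (-z)).integrableOn) hint measurableSet_Iic
    intro x hx
    rw [mem_Iic] at hx
    exact mul_le_mul_of_nonneg_right (by linarith) (Real.exp_pos _).le
  rw [MeasureTheory.integral_const_mul] at hmono
  have hphi : Real.sqrt (2 * Real.pi) * stdNormCDF z
      = ∫ t in Iic z, Real.exp (-(t ^ 2) / 2) := by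
    unfold stdNormCDF
    rw [← mul_assoc, mul_inv_cancel₀ sqrt2pi_pos.ne', one_mul]
  rw [hphi, mul_comm, ← key]
  exact hmono

lemma aux_sqrt_ge {K z s : ℝ} (hK : 0 < K) (hs0 : 0 ≤ s) (hs2 : s ^ 2 = 8 * K + z ^ 2) :
    -z ≤ s := by nlinarith [sq_nonneg (s + z)]

lemma aux_sq_mono {a b : ℝ} (h : a < b) (hb : b ≤ -1) : b ^ 2 ≤ a ^ 2 := by nlinarith

lemma aux_f1 {K z s : ℝ} (hK : 1 ≤ K) (hz : z ≤ -1) (hs0 : 0 ≤ s)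
    (hs2 : s ^ 2 = 8 * K + z ^ 2) : 1 ≤ (s - z) / 2 := by nlinarith

lemma aux_lip {z z' s s' : ℝ} (hzz : z' < z) (hz : z ≤ -1)
    (hsz : -z ≤ s) (hsz' : -z' ≤ s')
    (hs2 : s ^ 2 = 8 * ((s ^ 2 - z ^ 2) / 8) + z ^ 2)
    (hkey : s' ^ 2 - z' ^ 2 = s ^ 2 - z ^ 2) :
    s' - s ≤ z - z' := by
  have hsum : (0:ℝ) < s' + s := by linarith
  by_contra hcon
  push_neg at hcon
  have h8 : (z - z') * (s' + s) < (s' - s) * (s' + s) := mul_lt_mul_of_pos_right hcon hsum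
  have hq : (z - z') * (-z + -z') ≤ (z - z') * (s + s') :=
    mul_le_mul_of_nonneg_left (by linarith) (by linarith)
  nlinarith [h8, hq, hkey]

lemma aux_final {F F' M : ℝ} (hF : 1 ≤ F) (hFF : F ≤ F') (hD : F' - F ≤ M) (hM : 0 ≤ M) :
    F' ^ 2 - F ^ 2 ≤ (2 + M) * M * F := by
  have h1 := mul_le_mul_of_nonneg_right hD (by linarith : (0:ℝ) ≤ F' + F)
  have h2 := mul_le_mul_of_nonneg_left (show F' ≤ F + M by linarith) hM
  have h3 := mul_le_mul_of_nonneg_left hF (mul_nonneg hM hM)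
  nlinarith [h1, h2, h3]


/-- Stability of the continuum solution `n₀(c,k)` in `c`: `n₀(c,k)` is the least real
`n > 2k` with `Φ_{k,n} ≤ c/k`, and for fixed `0 < c' < c`, the normalized difference
`|n₀(c,k) − n₀(c',k)| / √(n₀(c,k))` is bounded by a finite constant `C = C(c,c')` for all
sufficiently large `k`. -/
theorem continuum_solution_stability
    (c c' : ℝ) (hc' : 0 < c') (hcc : c' < c) :
    (∀ k : ℕ, 2 * c < k →
      IsLeast {n : ℝ | 2 * (k : ℝ) < n ∧
        stdNormCDF ((2 * (k : ℝ) - n) / Real.sqrt n) ≤ c / k} (n0 c k)) ∧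
    ∃ C : ℝ, ∃ k0 : ℕ, ∀ k : ℕ, k0 ≤ k →
      |n0 c k - n0 c' k| / Real.sqrt (n0 c k) ≤ C := by
  have hc : 0 < c := hc'.trans hcc
  constructor
  · -- Part 1: IsLeast
    intro k hk
    have hk0 : (0:ℝ) < k := by linarith
    have hck0 : 0 < c / k := div_pos hc hk0
    have hck1 : c / k < 1/2 := by rw [div_lt_iff₀ hk0]; linarith
    have hPhi : stdNormCDF (PhiInv (c / k)) = c / k :=
      Function.invFun_eq (phi_surj hck0 (by linarith))
    have hn0 : n0 c k
        = ((Real.sqrt (8 * k + (PhiInv (c / k)) ^ 2) - PhiInv (c / k)) / 2) ^ 2 := rfl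
    set z := PhiInv (c / k) with hzdef
    have hz0 : z < 0 := by
      have h2 : stdNormCDF z < stdNormCDF 0 := by rw [hPhi, phi_zero]; linarith
      exact phi_strictMono.lt_iff_lt.mp h2
    set s := Real.sqrt (8 * k + z ^ 2) with hsdef
    have hs2 : s ^ 2 = 8 * k + z ^ 2 := Real.sq_sqrt (by positivity)
    have hs_nonneg : 0 ≤ s := Real.sqrt_nonneg _
    have hs_gt : -z < s ∧ z < s := by constructor <;> nlinarith [hk0]
    clear_value s
    set f := (s - z) / 2 with hfdef
    have hf_pos : 0 < f := by simp only [hfdef]; linarith [hs_gt.2]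
    have hn0f : n0 c k = f ^ 2 := hn0
    have hquad : f ^ 2 = 2 * k - z * f := by
      simp only [hfdef]; nlinarith [hs2]
    have hn0k : 2 * (k:ℝ) < n0 c k := by
      rw [hn0f, hquad]; nlinarith [mul_pos (neg_pos.2 hz0) hf_pos]
    have hsqrt : Real.sqrt (n0 c k) = f := by
      rw [hn0f]; exact Real.sqrt_sq hf_pos.le
    constructor
    · refine ⟨hn0k, ?_⟩
      have harg : (2 * (k:ℝ) - n0 c k) / Real.sqrt (n0 c k) = z := by
        rw [hsqrt, hn0f, hquad]
        field_simp
        ring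
      rw [harg, hPhi]
    · rintro n ⟨hn1, hn2⟩
      have hnpos : 0 < n := lt_trans (by positivity) hn1
      have hu2 : Real.sqrt n ^ 2 = n := Real.sq_sqrt hnpos.le
      have hu_pos : 0 < Real.sqrt n := Real.sqrt_pos.2 hnpos
      set u := Real.sqrt n with hudef
      have harg : (2 * (k:ℝ) - n) / u ≤ z := by
        by_contra h
        push_neg at h
        have h2 := phi_strictMono h
        rw [hPhi] at h2
        linarith
      have h1 : 2 * (k:ℝ) - n ≤ z * u := by
        rw [div_le_iff₀ hu_pos] at harg; linarith
      have hfz : 0 < f + z := by simp only [hfdef]; linarith [hs_gt.1]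
      have hfu : f ≤ u := by
        by_contra h
        push_neg at h
        nlinarith [h1, hquad, hu2]
      calc n0 c k = f ^ 2 := hn0f
        _ ≤ u ^ 2 := by nlinarith
        _ = n := hu2
  · -- Part 2: uniform bound
    set M := (c - c') / c' with hMdef
    have hM0 : 0 ≤ M := div_nonneg (by linarith) hc'.le
    refine ⟨(2 + M) * M, max (⌈c / stdNormCDF (-1)⌉₊) (⌈c⌉₊ + 1), fun k hk => ?_⟩
    have hΦ1 : 0 < stdNormCDF (-1) := phi_pos _
    have hk1 : (⌈c⌉₊ + 1 : ℕ) ≤ k := le_trans (le_max_right _ _) hk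
    have hkR : c + 1 ≤ (k:ℝ) := by
      have h2 : ((⌈c⌉₊ : ℝ) + 1) ≤ (k:ℝ) := by exact_mod_cast hk1
      have := Nat.le_ceil c
      linarith
    have hkpos : (0:ℝ) < k := by linarith
    have hck : c / k ≤ stdNormCDF (-1) := by
      have h2 : c / stdNormCDF (-1) ≤ (k:ℝ) := by
        have h3 : (⌈c / stdNormCDF (-1)⌉₊ : ℕ) ≤ k := le_trans (le_max_left _ _) hk
        exact le_trans (Nat.le_ceil _) (by exact_mod_cast h3)
      rw [div_le_iff₀ hkpos]
      rw [div_le_iff₀ hΦ1] at h2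
      nlinarith
    have hck0 : 0 < c / k := div_pos hc hkpos
    have hck1 : c / k < 1 := by rw [div_lt_iff₀ hkpos]; linarith
    have hc'k0 : 0 < c' / k := div_pos hc' hkpos
    have hc'k1 : c' / k < 1 := by rw [div_lt_iff₀ hkpos]; linarith
    have hPhiz : stdNormCDF (PhiInv (c / k)) = c / k :=
      Function.invFun_eq (phi_surj hck0 hck1)
    have hPhiz' : stdNormCDF (PhiInv (c' / k)) = c' / k :=
      Function.invFun_eq (phi_surj hc'k0 hc'k1)
    have hn0c : n0 c k
        = ((Real.sqrt (8 * k + (PhiInv (c / k)) ^ 2) - PhiInv (c / k)) / 2) ^ 2 := rfl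
    have hn0c' : n0 c' k
        = ((Real.sqrt (8 * k + (PhiInv (c' / k)) ^ 2) - PhiInv (c' / k)) / 2) ^ 2 := rfl
    set z := PhiInv (c / k) with hzdef
    set z' := PhiInv (c' / k) with hz'def
    clear_value z z'
    have hzneg : z ≤ -1 := by
      have h2 : stdNormCDF z ≤ stdNormCDF (-1) := by rw [hPhiz]; exact hck
      exact phi_strictMono.le_iff_le.mp h2
    have hzz' : z' < z := by
      apply phi_strictMono.lt_iff_lt.mp
      rw [hPhiz, hPhiz']
      gcongr
    have hzz0 : (0:ℝ) ≤ z - z' := by linarith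
    have hz'neg : z' < -1 := lt_of_lt_of_le hzz' hzneg
    have hA := gap_lower hzz'.le (by linarith : z ≤ 0)
    rw [hPhiz, hPhiz'] at hA
    have hB := tail_upper (by linarith : z' < 0)
    rw [hPhiz'] at hB
    have hs2pi := sqrt2pi_pos
    have hzzM : z - z' ≤ M := by
      have hstep : Real.sqrt (2 * Real.pi) * (c' / k) ≤ Real.exp (-(z' ^ 2) / 2) := by
        calc Real.sqrt (2 * Real.pi) * (c' / k)
            ≤ Real.sqrt (2 * Real.pi) * (c' / k) * (-z') :=
              le_mul_of_one_le_right (mul_pos hs2pi hc'k0).le (by linarith)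
          _ ≤ Real.exp (-(z' ^ 2) / 2) := hB
      have h1 : (z - z') * (Real.sqrt (2 * Real.pi) * (c' / k))
          ≤ Real.sqrt (2 * Real.pi) * (c / k - c' / k) :=
        le_trans (mul_le_mul_of_nonneg_left hstep hzz0) hA
      have h3 : (z - z') * (c' / k) ≤ c / k - c' / k := by
        rw [show (z - z') * (Real.sqrt (2 * Real.pi) * (c' / k))
            = Real.sqrt (2 * Real.pi) * ((z - z') * (c' / k)) from by ring] at h1
        exact (mul_le_mul_iff_right₀ hs2pi).mp h1
      have h5 : (z - z') * c' ≤ c - c' := by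
        have h4 := mul_le_mul_of_nonneg_right h3 hkpos.le
        calc (z - z') * c' = (z - z') * (c' / k) * k := by field_simp
          _ ≤ (c / k - c' / k) * k := h4
          _ = c - c' := by field_simp
      rw [hMdef, le_div_iff₀ hc']
      exact h5
    -- geometry of the map z ↦ (√(8k+z²) − z)/2
    have hk1R : (1:ℝ) ≤ (k:ℝ) := by linarith
    set s := Real.sqrt (8 * k + z ^ 2) with hsdef
    set s' := Real.sqrt (8 * k + z' ^ 2) with hs'def
    have hs2 : s ^ 2 = 8 * k + z ^ 2 := Real.sq_sqrt (by positivity)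
    have hs'2 : s' ^ 2 = 8 * k + z' ^ 2 := Real.sq_sqrt (by positivity)
    have hss' : s ≤ s' := by
      rw [hsdef, hs'def]
      exact Real.sqrt_le_sqrt (by linarith [aux_sq_mono hzz' hzneg])
    have hs0 : (0:ℝ) ≤ s := Real.sqrt_nonneg _
    have hs'0 : (0:ℝ) ≤ s' := Real.sqrt_nonneg _
    clear_value s s'
    have hsz : -z ≤ s := aux_sqrt_ge hkpos hs0 hs2
    have hsz' : -z' ≤ s' := aux_sqrt_ge hkpos hs'0 hs'2
    have hf1 : (1:ℝ) ≤ (s - z) / 2 := aux_f1 hk1R hzneg hs0 hs2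
    have hfpos : (0:ℝ) < (s - z) / 2 := by linarith
    have hlip : (s' - z') / 2 - (s - z) / 2 ≤ z - z' := by
      have hss : s' - s ≤ z - z' :=
        aux_lip hzz' hzneg hsz hsz' (by linarith [hs2]) (by linarith [hs2, hs'2])
      linarith
    have hff' : (s - z) / 2 ≤ (s' - z') / 2 := by linarith
    have hsqrtc : Real.sqrt (n0 c k) = (s - z) / 2 := by
      rw [hn0c]
      exact Real.sqrt_sq hfpos.le
    have habs : |n0 c k - n0 c' k| = ((s' - z') / 2) ^ 2 - ((s - z) / 2) ^ 2 := by
      rw [hn0c, hn0c', abs_sub_comm,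
        abs_of_nonneg (sub_nonneg.2 (pow_le_pow_left₀ hfpos.le hff' 2))]
    rw [habs, hsqrtc, div_le_iff₀ hfpos]
    exact aux_final hf1 hff' (le_trans hlip hzzM) hM0
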